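/- With u satisfying Assumptions 1 and 2 and f(x) := u(x,x) - u(x), the function x ↦ u(x) - f(x) = 2u(x) - u(x,x) is nondecreasing on ℝ≥0. -/

import Mathlib

open scoped NNReal

/-- `u` is symmetric: invariant under permutations of its arguments. -/
def IsSymmU (u : List ℝ≥0 → ℝ) : Prop := ∀ l l' : List ℝ≥0, l.Perm l' → u l = u l'

/-- `u` is nondecreasing in each argument. -/
def IsMonoU (u : List ℝ≥0 → ℝ) : Prop :=
  ∀ l l' : List ℝ≥0, List.Forall₂ (· ≤ ·) l l' → u l ≤ u l'

/-- `u` is submodular: `u(x∧y)+u(x∨y) ≤ u(x)+u(y)` for equal-length tuples. -/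
def IsSubmodU (u : List ℝ≥0 → ℝ) : Prop := ∀ l l' : List ℝ≥0, l.length = l'.length →
  u (List.zipWith min l l') + u (List.zipWith max l l') ≤ u l + u l'

/-- `u` is continuous on tuples of each fixed length. -/
def IsContU (u : List ℝ≥0 → ℝ) : Prop :=
  ∀ n : ℕ, Continuous (fun v : Fin n → ℝ≥0 => u (List.ofFn v))

/-- Assumption 1: `u(∅)=0`, prepending a zero leaves `u` unchanged, `u` nonnegative,
continuous, symmetric, nondecreasing and submodular. -/
def Assumption1 (u : List ℝ≥0 → ℝ) : Prop :=
  u [] = 0 ∧ (∀ l, u (0 :: l) = u l) ∧ (∀ l, 0 ≤ u l) ∧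
    IsContU u ∧ IsSymmU u ∧ IsMonoU u ∧ IsSubmodU u

/-- Assumption 2: the benefit of raising an argument from `0` to `xi` does not
depend on the values of other arguments exceeding `xi`. -/
def Assumption2 (u : List ℝ≥0 → ℝ) : Prop :=
  ∀ (l : List ℝ≥0) (xi xlo xhi : ℝ≥0), xi ≤ xlo → xlo < xhi →
    u (l ++ [xhi, xi]) - u (l ++ [xhi, 0]) = u (l ++ [xlo, xi]) - u (l ++ [xlo, 0])

/-- Under Assumptions 1 and 2, with `f(x) = u(x,x) - u(x)`, the function
`u - f = 2u(x) - u(x,x)` is nondecreasing on `ℝ≥0`. -/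
theorem stmt_10 (u : List ℝ≥0 → ℝ) (hA1 : Assumption1 u) (hA2 : Assumption2 u) :
    Monotone (fun x : ℝ≥0 => 2 * u [x] - u [x, x]) := by
  intro x y hxy
  rcases eq_or_lt_of_le hxy with rfl | hlt
  · exact le_refl _
  obtain ⟨h0, hzero, hnn, hcont, hsym, hmono, hsub⟩ := hA1
  have hx0 : ∀ a : ℝ≥0, u [a, 0] = u [a] := fun a => by
    rw [hsym [a, 0] [0, a] (List.Perm.swap 0 a []), hzero]
  have hA2' := hA2 [] x x y le_rfl hlt
  simp only [List.nil_append] at hA2'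
  rw [hx0, hx0] at hA2'
  have hsubm := hsub [x, y] [y, 0] rfl
  simp only [List.zipWith] at hsubm
  rw [min_eq_left hxy, max_eq_right hxy, min_eq_right (zero_le : (0 : ℝ≥0) ≤ y),
    max_eq_left (zero_le : (0 : ℝ≥0) ≤ y), hx0, hx0] at hsubm
  have hxy' : u [x, y] = u [y, x] := hsym _ _ (List.Perm.swap y x [])
  simp only
  linarith
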